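/- Let S be a Γ-graded semigroup and A a unital ring, and view the contracted semigroup ring A[S] as a Γ-graded ring via the grading induced by that on S. Then: (1) S is a strongly Γ-graded semigroup if and only if A[S] is a strongly Γ-graded ring; (2) there is a natural ring isomorphism A[S#Γ] ≅ A[S]#Γ, sending Σ a^{(sP_α)}(sP_α) to Σ_α (Σ_s a^{(sP_α)} s) P_α. -/

import Mathlib

open Pointwise

/-- A `Γ`-grading on a semigroup with zero `S`. -/
structure Grading (Γ : Type*) [Group Γ] (S : Type*) [SemigroupWithZero S] where
  deg : S → Γ
  deg_mul : ∀ s t : S, s * t ≠ 0 → deg (s * t) = deg s * deg t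

namespace Grading

variable {Γ : Type*} [Group Γ] {S : Type*} [SemigroupWithZero S]

/-- The component `S_α = φ⁻¹(α) ∪ {0}` of a `Γ`-graded semigroup. -/
def comp (g : Grading Γ S) (α : Γ) : Set S := {s | s = 0 ∨ g.deg s = α}

/-- `S` is strongly graded if `S_α S_β = S_{αβ}` for all `α, β ∈ Γ`. -/
def IsStrong (g : Grading Γ S) : Prop :=
  ∀ α β : Γ, g.comp α * g.comp β = g.comp (α * β)

end Grading

/-- The underlying set of the smash product `S#Γ`. -/
abbrev Smash (Γ : Type u) (S : Type v) [SemigroupWithZero S] : Type max u v :=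
  Option ({ s : S // s ≠ 0 } × Γ)

open Classical in
/-- Multiplication in the smash product semigroup `S#Γ`. -/
noncomputable def smashMul {Γ : Type u} [Group Γ] {S : Type v} [SemigroupWithZero S]
    (g : Grading Γ S) (a b : Smash Γ S) : Smash Γ S :=
  a.bind fun p => b.bind fun q =>
    if h : p.1.1 * q.1.1 ≠ 0 ∧ g.deg q.1.1 = p.2 * q.2⁻¹ then
      some (⟨p.1.1 * q.1.1, h.1⟩, q.2)
    else none

open Classical in
/-- Multiplication of the contracted semigroup ring `A[T]` of a "semigroup with zero"
given by a carrier `T`, a zero element `z : T`, and a multiplication `m`; the ring is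
modelled as the finitely supported functions on `T \ {z}`. -/
noncomputable def cmul {A : Type u'} [Ring A] {T : Type v'} (z : T) (m : T → T → T)
    (x y : {t : T // t ≠ z} →₀ A) : {t : T // t ≠ z} →₀ A :=
  x.sum fun s a => y.sum fun t b =>
    if h : m s.1 t.1 ≠ z then Finsupp.single ⟨m s.1 t.1, h⟩ (a * b) else 0

/-- The homogeneous component `A[S]_α = A[S_α]` of the contracted semigroup ring. -/
def ringComp {Γ : Type u} [Group Γ] {S : Type v} [SemigroupWithZero S]
    (g : Grading Γ S) (A : Type u') [Ring A] (α : Γ) :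
    Set ({s : S // s ≠ (0 : S)} →₀ A) :=
  {x | ∀ s : {s : S // s ≠ (0 : S)}, x s ≠ 0 → g.deg s.1 = α}

open Classical in
/-- The natural map `A[S#Γ] → A[S]#Γ`,
`Σ a^{(sP_α)} (sP_α) ↦ Σ_α (Σ_s a^{(sP_α)} s) P_α`, where `A[S]#Γ` is modelled as the
finitely supported functions `Γ →₀ A[S]`. -/
noncomputable def smashToFun {Γ : Type u} [Group Γ] {S : Type v} [SemigroupWithZero S]
    (A : Type u') [Ring A] (x : {t : Smash Γ S // t ≠ none} →₀ A) :
    Γ →₀ ({s : S // s ≠ (0 : S)} →₀ A) :=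
  x.sum fun p a =>
    match p with
    | ⟨some q, _⟩ => Finsupp.single q.2 (Finsupp.single q.1 a)
    | ⟨none, h⟩ => absurd rfl h

open Classical in
/-- Multiplication in the ring smash product `A[S]#Γ`:
`(a P_α)(b P_β) = (a ⬝ b_{αβ⁻¹}) P_β`, where `b_{αβ⁻¹}` is the degree-`αβ⁻¹`
homogeneous component of `b`. -/
noncomputable def smashRingMul {Γ : Type u} [Group Γ] {S : Type v} [SemigroupWithZero S]
    (g : Grading Γ S) (A : Type u') [Ring A]
    (F G : Γ →₀ ({s : S // s ≠ (0 : S)} →₀ A)) :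
    Γ →₀ ({s : S // s ≠ (0 : S)} →₀ A) :=
  F.sum fun α a => G.sum fun β b =>
    Finsupp.single β (cmul (0 : S) (· * ·) a (b.filter fun s => g.deg s.1 = α * β⁻¹))

section AuxLemmas

open Classical Finsupp

variable {Γ : Type u} [Group Γ] {S : Type v} [SemigroupWithZero S]
variable {A : Type u'} [Ring A] {T : Type v'}

lemma cmul_zero_left (z : T) (m : T → T → T) (y : {t : T // t ≠ z} →₀ A) :
    cmul z m 0 y = 0 := Finsupp.sum_zero_index

lemma cmul_zero_right (z : T) (m : T → T → T) (x : {t : T // t ≠ z} →₀ A) :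
    cmul z m x 0 = 0 := by
  unfold cmul
  simp [Finsupp.sum_zero_index]

lemma cmul_add_left (z : T) (m : T → T → T) (x x' y : {t : T // t ≠ z} →₀ A) :
    cmul z m (x + x') y = cmul z m x y + cmul z m x' y := by
  unfold cmul
  apply Finsupp.sum_add_index'
  · intro s
    apply Finset.sum_eq_zero
    intro t _
    simp
  · intro s a a'
    rw [← Finsupp.sum_add]
    apply Finsupp.sum_congr
    intro t _
    split <;> simp [add_mul, Finsupp.single_add]

lemma cmul_add_right (z : T) (m : T → T → T) (x y y' : {t : T // t ≠ z} →₀ A) :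
    cmul z m x (y + y') = cmul z m x y + cmul z m x y' := by
  unfold cmul
  rw [← Finsupp.sum_add]
  apply Finsupp.sum_congr
  intro s _
  apply Finsupp.sum_add_index'
  · intro t; split <;> simp
  · intro t b b'; split <;> simp [mul_add, Finsupp.single_add]

lemma cmul_single_single (z : T) (m : T → T → T) (s t : {t : T // t ≠ z}) (a b : A) :
    cmul z m (Finsupp.single s a) (Finsupp.single t b) =
      if h : m s.1 t.1 ≠ z then Finsupp.single ⟨m s.1 t.1, h⟩ (a * b) else 0 := by
  unfold cmul
  rw [Finsupp.sum_single_index (by apply Finset.sum_eq_zero; intro u _; simp),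
      Finsupp.sum_single_index (by split <;> simp)]

lemma smashToFun_zero (A : Type u') [Ring A] :
    smashToFun (Γ := Γ) (S := S) A 0 = 0 := Finsupp.sum_zero_index

lemma smashToFun_single (A : Type u') [Ring A] (q : {s : S // s ≠ 0} × Γ)
    (h : (some q : Smash Γ S) ≠ none) (a : A) :
    smashToFun A (Finsupp.single ⟨some q, h⟩ a) =
      Finsupp.single q.2 (Finsupp.single q.1 a) := by
  unfold smashToFun
  rw [Finsupp.sum_single_index] <;> simp

lemma smashToFun_add (A : Type u') [Ring A] (x y : {t : Smash Γ S // t ≠ none} →₀ A) :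
    smashToFun A (x + y) = smashToFun A x + smashToFun A y := by
  unfold smashToFun
  apply Finsupp.sum_add_index'
  · rintro ⟨_ | q, h⟩
    · exact absurd rfl h
    · simp
  · rintro ⟨_ | q, h⟩ a a'
    · exact absurd rfl h
    · simp [Finsupp.single_add]

lemma smashRingMul_zero_left (g : Grading Γ S) (A : Type u') [Ring A]
    (G : Γ →₀ ({s : S // s ≠ (0 : S)} →₀ A)) : smashRingMul g A 0 G = 0 :=
  Finsupp.sum_zero_index

lemma smashRingMul_zero_right (g : Grading Γ S) (A : Type u') [Ring A]
    (F : Γ →₀ ({s : S // s ≠ (0 : S)} →₀ A)) : smashRingMul g A F 0 = 0 := by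
  unfold smashRingMul
  simp [Finsupp.sum_zero_index]

lemma smashRingMul_add_left (g : Grading Γ S) (A : Type u') [Ring A]
    (F F' G : Γ →₀ ({s : S // s ≠ (0 : S)} →₀ A)) :
    smashRingMul g A (F + F') G = smashRingMul g A F G + smashRingMul g A F' G := by
  unfold smashRingMul
  apply Finsupp.sum_add_index'
  · intro α
    apply Finset.sum_eq_zero
    intro β _
    simp [cmul_zero_left]
  · intro α a a'
    rw [← Finsupp.sum_add]
    apply Finsupp.sum_congr
    intro β _
    simp [cmul_add_left, Finsupp.single_add]

lemma smashRingMul_add_right (g : Grading Γ S) (A : Type u') [Ring A]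
    (F G G' : Γ →₀ ({s : S // s ≠ (0 : S)} →₀ A)) :
    smashRingMul g A F (G + G') = smashRingMul g A F G + smashRingMul g A F G' := by
  unfold smashRingMul
  rw [← Finsupp.sum_add]
  apply Finsupp.sum_congr
  intro α _
  apply Finsupp.sum_add_index'
  · intro β; simp [Finsupp.filter_zero, cmul_zero_right]
  · intro β b b'; simp [Finsupp.filter_add, cmul_add_right, Finsupp.single_add]

lemma smashRingMul_single_single (g : Grading Γ S) (A : Type u') [Ring A] (α β : Γ)
    (a b : {s : S // s ≠ (0 : S)} →₀ A) :
    smashRingMul g A (Finsupp.single α a) (Finsupp.single β b) =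
      Finsupp.single β (cmul (0 : S) (· * ·) a
        (b.filter fun s => g.deg s.1 = α * β⁻¹)) := by
  have h1 : ∀ β' : Γ, Finsupp.single β' (cmul (0 : S) (· * ·) a
      (Finsupp.filter (fun s => g.deg s.1 = α * β'⁻¹) (0 : {s : S // s ≠ (0 : S)} →₀ A)))
        = 0 := by
    intro β'; simp [Finsupp.filter_zero, cmul_zero_right]
  unfold smashRingMul
  rw [Finsupp.sum_single_index, Finsupp.sum_single_index (h1 β)]
  apply Finset.sum_eq_zero
  intro β' _
  simp [cmul_zero_left]

end AuxLemmas
section Aux2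

open Classical Pointwise

variable {Γ : Type u} [Group Γ] {S : Type v} [SemigroupWithZero S]
variable {A : Type u'} [Ring A]

/-- `ringComp` as an `AddSubmonoid`. -/
def ringCompAdd (g : Grading Γ S) (A : Type u') [Ring A] (γ : Γ) :
    AddSubmonoid ({s : S // s ≠ (0 : S)} →₀ A) where
  carrier := ringComp g A γ
  zero_mem' := by intro s hs; simp at hs
  add_mem' := by
    intro x y hx hy s hs
    rw [Finsupp.add_apply] at hs
    by_cases h1 : x s = 0
    · exact hy s (by simpa [h1] using hs)
    · exact hx s h1

lemma single_mem_ringComp (g : Grading Γ S) {γ : Γ} (s : {s : S // s ≠ (0 : S)})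
    (c : A) (h : g.deg s.1 = γ) : Finsupp.single s c ∈ ringComp g A γ := by
  intro t ht
  rw [Finsupp.single_apply_ne_zero] at ht
  rw [ht.1, h]

lemma cmul_apply_ne_zero (x y : {s : S // s ≠ (0 : S)} →₀ A)
    (t : {s : S // s ≠ (0 : S)}) (ht : cmul (0 : S) (· * ·) x y t ≠ 0) :
    ∃ u ∈ x.support, ∃ v ∈ y.support, ∃ h : u.1 * v.1 ≠ 0, t = ⟨u.1 * v.1, h⟩ := by
  unfold cmul at ht
  rw [Finsupp.sum_apply] at ht
  obtain ⟨u, hu, h1⟩ := Finset.exists_ne_zero_of_sum_ne_zero ht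
  dsimp only at h1
  rw [Finsupp.sum_apply] at h1
  obtain ⟨v, hv, h2⟩ := Finset.exists_ne_zero_of_sum_ne_zero h1
  dsimp only at h2
  split at h2
  · rename_i h
    rw [Finsupp.single_apply_ne_zero] at h2
    exact ⟨u, hu, v, hv, h, h2.1⟩
  · simp at h2

lemma cmul_mem (g : Grading Γ S) {α β : Γ} {x y : {s : S // s ≠ (0 : S)} →₀ A}
    (hx : x ∈ ringComp g A α) (hy : y ∈ ringComp g A β) :
    cmul (0 : S) (· * ·) x y ∈ ringComp g A (α * β) := by
  intro t ht
  obtain ⟨u, hu, v, hv, h, rfl⟩ := cmul_apply_ne_zero x y t ht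
  rw [g.deg_mul _ _ h, hx u (Finsupp.mem_support_iff.mp hu),
    hy v (Finsupp.mem_support_iff.mp hv)]

open Classical in
/-- The inverse of `smashToFun`. -/
noncomputable def smashInv {Γ : Type u} [Group Γ] {S : Type v} [SemigroupWithZero S]
    (A : Type u') [Ring A] (F : Γ →₀ ({s : S // s ≠ (0 : S)} →₀ A)) :
    {t : Smash Γ S // t ≠ none} →₀ A :=
  F.sum fun γ a => a.sum fun s c =>
    Finsupp.single ⟨some (s, γ), Option.some_ne_none _⟩ c

lemma smashInv_zero : smashInv (Γ := Γ) (S := S) A 0 = 0 := Finsupp.sum_zero_index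

lemma smashInv_add (F G : Γ →₀ ({s : S // s ≠ (0 : S)} →₀ A)) :
    smashInv A (F + G) = smashInv A F + smashInv A G := by
  unfold smashInv
  apply Finsupp.sum_add_index'
  · intro γ; exact Finsupp.sum_zero_index
  · intro γ a a'
    apply Finsupp.sum_add_index'
    · intro s; simp
    · intro s c c'; simp [Finsupp.single_add]

lemma smashInv_smashToFun (x : {t : Smash Γ S // t ≠ none} →₀ A) :
    smashInv A (smashToFun A x) = x := by
  induction x using Finsupp.induction with
  | zero => rw [smashToFun_zero]; exact smashInv_zero
  | single_add p b f hp hb ih =>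
    rcases p with ⟨_ | q, h⟩
    · exact absurd rfl h
    · rw [smashToFun_add, smashInv_add, ih, smashToFun_single]
      congr 1
      unfold smashInv
      rw [Finsupp.sum_single_index (by exact Finsupp.sum_zero_index),
          Finsupp.sum_single_index (by simp)]

lemma smashToFun_inv_single (γ : Γ) (a : {s : S // s ≠ (0 : S)} →₀ A) :
    smashToFun A (a.sum fun s c =>
      Finsupp.single (⟨some (s, γ), Option.some_ne_none _⟩ :
        {t : Smash Γ S // t ≠ none}) c) = Finsupp.single γ a := by
  induction a using Finsupp.induction with
  | zero => rw [Finsupp.sum_zero_index, smashToFun_zero, Finsupp.single_zero]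
  | single_add s c a hs hc ih =>
    rw [Finsupp.sum_add_index' (by simp) (by intros; simp [Finsupp.single_add]),
        smashToFun_add, ih, Finsupp.sum_single_index (by simp), smashToFun_single,
        Finsupp.single_add]

lemma smashToFun_smashInv (F : Γ →₀ ({s : S // s ≠ (0 : S)} →₀ A)) :
    smashToFun A (smashInv A F) = F := by
  induction F using Finsupp.induction with
  | zero => rw [smashInv_zero, smashToFun_zero]
  | single_add γ a F hγ ha ih =>
    rw [smashInv_add, smashToFun_add, ih]
    congr 1
    have h1 : smashInv A (Finsupp.single γ a) =
        a.sum fun s c => Finsupp.single (⟨some (s, γ), Option.some_ne_none _⟩ :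
          {t : Smash Γ S // t ≠ none}) c := by
      unfold smashInv
      exact Finsupp.sum_single_index Finsupp.sum_zero_index
    rw [h1, smashToFun_inv_single]

open Classical in
lemma smashMul_some_some (g : Grading Γ S) (p q : {s : S // s ≠ (0 : S)} × Γ) :
    smashMul g (some p) (some q) =
      if h : p.1.1 * q.1.1 ≠ 0 ∧ g.deg q.1.1 = p.2 * q.2⁻¹ then
        some (⟨p.1.1 * q.1.1, h.1⟩, q.2)
      else none := rfl

lemma mul_single_single (g : Grading Γ S) (p q : {s : S // s ≠ (0 : S)} × Γ)
    (hp : (some p : Smash Γ S) ≠ none) (hq : (some q : Smash Γ S) ≠ none) (b c : A) :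
    smashToFun A (cmul (none : Smash Γ S) (smashMul g)
        (Finsupp.single ⟨some p, hp⟩ b) (Finsupp.single ⟨some q, hq⟩ c)) =
      smashRingMul g A (smashToFun A (Finsupp.single ⟨some p, hp⟩ b))
        (smashToFun A (Finsupp.single ⟨some q, hq⟩ c)) := by
  rw [cmul_single_single, smashToFun_single, smashToFun_single,
    smashRingMul_single_single, smashMul_some_some]
  by_cases hC : p.1.1 * q.1.1 ≠ 0 ∧ g.deg q.1.1 = p.2 * q.2⁻¹
  · rw [dif_pos hC, dif_pos (Option.some_ne_none _), smashToFun_single,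
      Finsupp.filter_single_of_pos (fun s : {s : S // s ≠ (0:S)} => g.deg s.1 = p.2 * q.2⁻¹) hC.2, cmul_single_single, dif_pos hC.1]
  · rw [dif_neg hC, dif_neg (by simp), smashToFun_zero]
    by_cases hdeg : g.deg q.1.1 = p.2 * q.2⁻¹
    · rw [Finsupp.filter_single_of_pos (fun s : {s : S // s ≠ (0:S)} => g.deg s.1 = p.2 * q.2⁻¹) hdeg, cmul_single_single,
        dif_neg (fun hx => hC ⟨hx, hdeg⟩), Finsupp.single_zero]
    · rw [Finsupp.filter_single_of_neg (fun s : {s : S // s ≠ (0:S)} => g.deg s.1 = p.2 * q.2⁻¹) hdeg, cmul_zero_right, Finsupp.single_zero]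

end Aux2
section Aux3

open Classical Pointwise

variable {Γ : Type u} [Group Γ] {S : Type v} [SemigroupWithZero S]
variable {A : Type u'} [Ring A]

lemma mul_single_left (g : Grading Γ S) (p : {t : Smash Γ S // t ≠ none}) (b : A)
    (y : {t : Smash Γ S // t ≠ none} →₀ A) :
    smashToFun A (cmul (none : Smash Γ S) (smashMul g) (Finsupp.single p b) y) =
      smashRingMul g A (smashToFun A (Finsupp.single p b)) (smashToFun A y) := by
  induction y using Finsupp.induction with
  | zero => rw [cmul_zero_right, smashToFun_zero, smashRingMul_zero_right]
  | single_add q c f hq hc ih =>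
    rw [cmul_add_right, smashToFun_add, smashToFun_add, smashRingMul_add_right, ih]
    congr 1
    obtain ⟨_ | p', hp⟩ := p
    · exact absurd rfl hp
    obtain ⟨_ | q', hq'⟩ := q
    · exact absurd rfl hq'
    exact mul_single_single g p' q' hp hq' b c

lemma smash_mul_compat (g : Grading Γ S) (x y : {t : Smash Γ S // t ≠ none} →₀ A) :
    smashToFun A (cmul (none : Smash Γ S) (smashMul g) x y) =
      smashRingMul g A (smashToFun A x) (smashToFun A y) := by
  induction x using Finsupp.induction with
  | zero => rw [cmul_zero_left, smashToFun_zero, smashRingMul_zero_left]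
  | single_add p b f hp hb ih =>
    rw [cmul_add_left, smashToFun_add, smashToFun_add, smashRingMul_add_left, ih]
    congr 1
    exact mul_single_left g p b y

end Aux3
/-- Proposition `hfhffhghggh`: for a `Γ`-graded semigroup `S` and a unital ring `A`,
with the contracted semigroup ring `A[S]` carrying the induced grading:
(1) `S` is strongly graded iff `A[S]` is a strongly graded ring (i.e. the additive
    closure of `A[S]_α ⬝ A[S]_β` is all of `A[S]_{αβ}`);
(2) there is a natural ring isomorphism `A[S#Γ] ≅ A[S]#Γ`, given by the explicit
    additive, multiplicative bijection `smashToFun`. -/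
theorem contracted_semigroup_ring_graded {Γ : Type u} [Group Γ] {S : Type v}
    [SemigroupWithZero S] (g : Grading Γ S) (A : Type u') [Ring A] [Nontrivial A] :
    (g.IsStrong ↔
      ∀ α β : Γ,
        (AddSubmonoid.closure
            (Set.image2 (cmul (0 : S) (· * ·)) (ringComp g A α) (ringComp g A β)) :
          Set ({s : S // s ≠ (0 : S)} →₀ A)) = ringComp g A (α * β)) ∧
    (Function.Bijective (smashToFun (Γ := Γ) (S := S) A) ∧
     (∀ x y : {t : Smash Γ S // t ≠ none} →₀ A,
        smashToFun A (x + y) = smashToFun A x + smashToFun A y) ∧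
     (∀ x y : {t : Smash Γ S // t ≠ none} →₀ A,
        smashToFun A (cmul (none : Smash Γ S) (smashMul g) x y) =
          smashRingMul g A (smashToFun A x) (smashToFun A y))) := by
  classical
  constructor
  · constructor
    · -- strongly graded semigroup → strongly graded ring
      intro hS α β
      apply Set.Subset.antisymm
      · intro x hx
        have hle : AddSubmonoid.closure (Set.image2 (cmul (0 : S) (· * ·))
            (ringComp g A α) (ringComp g A β)) ≤ ringCompAdd g A (α * β) := by
          rw [AddSubmonoid.closure_le]
          rintro _ ⟨u, hu, v, hv, rfl⟩
          exact cmul_mem g hu hv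
        exact hle hx
      · intro x hx
        rw [SetLike.mem_coe, ← Finsupp.sum_single x]
        apply sum_mem
        intro s hs
        have hdeg : g.deg s.1 = α * β := hx s (Finsupp.mem_support_iff.mp hs)
        have hcomp : s.1 ∈ g.comp α * g.comp β := by rw [hS α β]; exact Or.inr hdeg
        obtain ⟨u, hu, v, hv, huv⟩ := Set.mem_mul.mp hcomp
        have hu0 : u ≠ 0 := by rintro rfl; rw [zero_mul] at huv; exact s.2 huv.symm
        have hv0 : v ≠ 0 := by rintro rfl; rw [mul_zero] at huv; exact s.2 huv.symm
        have hdu : g.deg u = α := hu.resolve_left hu0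
        have hdv : g.deg v = β := hv.resolve_left hv0
        apply AddSubmonoid.subset_closure
        refine Set.mem_image2.mpr ⟨Finsupp.single ⟨u, hu0⟩ 1,
          single_mem_ringComp g _ _ hdu, Finsupp.single ⟨v, hv0⟩ (x s),
          single_mem_ringComp g _ _ hdv, ?_⟩
        rw [cmul_single_single]
        have hne : u * v ≠ 0 := by rw [huv]; exact s.2
        rw [dif_pos hne]
        have hsub : (⟨u * v, hne⟩ : {s : S // s ≠ (0 : S)}) = s := Subtype.ext huv
        rw [hsub, one_mul]
    · -- strongly graded ring → strongly graded semigroup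
      intro h α β
      ext s
      constructor
      · intro hs
        obtain ⟨u, hu, v, hv, rfl⟩ := Set.mem_mul.mp hs
        by_cases h0 : u * v = 0
        · exact Or.inl h0
        · have hu0 : u ≠ 0 := fun e => h0 (by rw [e, zero_mul])
          have hv0 : v ≠ 0 := fun e => h0 (by rw [e, mul_zero])
          exact Or.inr (by
            rw [g.deg_mul u v h0, hu.resolve_left hu0, hv.resolve_left hv0])
      · intro hs
        by_cases h0 : s = 0
        · subst h0
          have h00 := Set.mul_mem_mul (show (0 : S) ∈ g.comp α from Or.inl rfl)
            (show (0 : S) ∈ g.comp β from Or.inl rfl)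
          simpa using h00
        · have hdeg : g.deg s = α * β := hs.resolve_left h0
          have hmem : Finsupp.single (⟨s, h0⟩ : {s : S // s ≠ (0 : S)}) (1 : A) ∈
              ringComp g A (α * β) := single_mem_ringComp g _ _ hdeg
          rw [← h α β] at hmem
          have key : ∀ x ∈ AddSubmonoid.closure (Set.image2 (cmul (0 : S) (· * ·))
              (ringComp g A α) (ringComp g A β)),
              ∀ t : {s : S // s ≠ (0 : S)}, x t ≠ 0 → t.1 ∈ g.comp α * g.comp β := by
            intro x hx
            refine AddSubmonoid.closure_induction ?_ ?_ ?_ hx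
            · rintro x ⟨u, hu, v, hv, rfl⟩ t ht
              obtain ⟨u', hu', v', hv', hne, rfl⟩ := cmul_apply_ne_zero u v t ht
              exact Set.mul_mem_mul (Or.inr (hu u' (Finsupp.mem_support_iff.mp hu')))
                (Or.inr (hv v' (Finsupp.mem_support_iff.mp hv')))
            · intro t ht; simp at ht
            · intro x y hxc hyc ihx ihy t ht
              rw [Finsupp.add_apply] at ht
              by_cases h1 : x t = 0
              · exact ihy t (by simpa [h1] using ht)
              · exact ihx t h1
          exact key _ hmem ⟨s, h0⟩
            (by rw [Finsupp.single_eq_same]; exact one_ne_zero)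
  · exact ⟨⟨Function.LeftInverse.injective (smashInv_smashToFun (A := A)),
      Function.RightInverse.surjective (smashToFun_smashInv (A := A))⟩,
      smashToFun_add A, smash_mul_compat g⟩
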